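/- For every ρ > 0 there exists a constant C > 0 such that for every α > 1, for β ≥ 0 the unique nonnegative real with cosh β = α, and for every φ ∈ ℝ, one has | ∫₀^β (α − cosh s)^{−1/2} · sin φ / (cosh(s/ρ) − cos φ) ds | ≤ C (α − 1)^{−1/2}. -/

import Mathlib

open MeasureTheory Real

lemma cosh_chord {β s : ℝ} (hβ : 0 < β) (hs : 0 ≤ s) (hsβ : s ≤ β) :
    (Real.cosh β - 1) * (β - s) ≤ (Real.cosh β - Real.cosh s) * β := by
  set t := s / β with ht
  have ht0 : 0 ≤ t := div_nonneg hs hβ.le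
  have ht1 : t ≤ 1 := (div_le_one hβ).2 hsβ
  have hts : t * β = s := div_mul_cancel₀ s hβ.ne'
  have h1 := convexOn_exp.2 (Set.mem_univ β) (Set.mem_univ 0) ht0
    (by linarith : (0:ℝ) ≤ 1 - t) (by ring)
  have h2 := convexOn_exp.2 (Set.mem_univ (-β)) (Set.mem_univ 0) ht0
    (by linarith : (0:ℝ) ≤ 1 - t) (by ring)
  simp only [smul_eq_mul, mul_zero, add_zero, Real.exp_zero, mul_one] at h1 h2
  have hkey : Real.cosh s ≤ t * Real.cosh β + (1 - t) := by
    have hcs : Real.cosh s = (Real.exp s + Real.exp (-s)) / 2 := Real.cosh_eq s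
    have hcb : Real.cosh β = (Real.exp β + Real.exp (-β)) / 2 := Real.cosh_eq β
    have e1 : rexp s ≤ t * rexp β + (1 - t) := by rw [← hts]; exact h1
    have e2 : rexp (-s) ≤ t * rexp (-β) + (1 - t) := by
      rw [← hts, show -(t*β) = t * -β by ring]; exact h2
    rw [hcs, hcb]; linarith
  have h3 : (1 - t) * β = β - s := by rw [← hts]; ring
  rw [← h3]
  nlinarith [mul_le_mul_of_nonneg_right hkey hβ.le]

lemma hasDerivAt_H {ρ φ : ℝ} (hρ : 0 < ρ) (hφ : Real.sin φ ≠ 0) (x : ℝ) :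
    HasDerivAt (fun s : ℝ => 2 * ρ * Real.arctan
        (Real.cos (φ/2) / Real.sin (φ/2) * Real.tanh (s / (2*ρ))))
      (Real.sin φ / (Real.cosh (x / ρ) - Real.cos φ)) x := by
  have hsphi : Real.sin φ = 2 * Real.sin (φ/2) * Real.cos (φ/2) := by
    rw [← Real.sin_two_mul]; congr 1; ring
  have hcphi' : Real.cos φ = 2 * Real.cos (φ/2)^2 - 1 := by
    rw [← Real.cos_two_mul]; congr 1; ring
  have hpy := Real.sin_sq_add_cos_sq (φ/2)
  have hcphi : Real.cos φ = 1 - 2 * Real.sin (φ/2)^2 := by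
    rw [hcphi']; nlinarith [hpy]
  have hs2 : Real.sin (φ/2) ≠ 0 := by
    intro h; apply hφ; rw [hsphi, h]; ring
  set k := Real.cos (φ/2) / Real.sin (φ/2) with hk
  have h2ρ : (2*ρ) ≠ 0 := by positivity
  have hu : HasDerivAt (fun s : ℝ => s / (2*ρ)) (1 / (2*ρ)) x := by
    simpa using (hasDerivAt_id x).div_const (2*ρ)
  set u := x / (2*ρ) with hudef
  have hsinh : HasDerivAt (fun s : ℝ => Real.sinh (s / (2*ρ)))
      (Real.cosh u * (1/(2*ρ))) x := hu.sinh
  have hcosh : HasDerivAt (fun s : ℝ => Real.cosh (s / (2*ρ)))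
      (Real.sinh u * (1/(2*ρ))) x := hu.cosh
  have hcne : Real.cosh u ≠ 0 := (Real.cosh_pos u).ne'
  have hC2 : (Real.cosh u)^2 = 1 + (Real.sinh u)^2 := Real.cosh_sq' u
  have htanh : HasDerivAt (fun s : ℝ => Real.tanh (s / (2*ρ)))
      (1/(2*ρ) / (Real.cosh u)^2) x := by
    have h := hsinh.div hcosh hcne
    have heq : (Real.cosh u * (1/(2*ρ)) * Real.cosh u -
        Real.sinh u * (Real.sinh u * (1/(2*ρ)))) / (Real.cosh u)^2
        = 1/(2*ρ) / (Real.cosh u)^2 := by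
      have h1 : Real.cosh u ^2 - Real.sinh u ^2 = 1 := Real.cosh_sq_sub_sinh_sq u
      field_simp
      nlinarith [h1]
    rw [heq] at h
    have : (fun s : ℝ => Real.sinh (s/(2*ρ)) / Real.cosh (s/(2*ρ)))
        = fun s : ℝ => Real.tanh (s/(2*ρ)) := by
      funext s; rw [Real.tanh_eq_sinh_div_cosh]
    rw [← this]; exact h
  have hg : HasDerivAt (fun s : ℝ => k * Real.tanh (s / (2*ρ)))
      (k * (1/(2*ρ) / (Real.cosh u)^2)) x := htanh.const_mul k
  have harc : HasDerivAt (fun s : ℝ => Real.arctan (k * Real.tanh (s / (2*ρ))))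
      (1 / (1 + (k * Real.tanh u)^2) * (k * (1/(2*ρ) / (Real.cosh u)^2))) x := by
    have := hg.arctan
    simpa using this
  have final := harc.const_mul (2*ρ)
  refine final.congr_deriv ?_
  set s2 := Real.sin (φ/2)
  set c2 := Real.cos (φ/2)
  set S := Real.sinh u
  set C := Real.cosh u
  have hS : Real.cosh (x/ρ) = 1 + 2 * S^2 := by
    have hxρ : x / ρ = 2 * u := by rw [hudef]; field_simp
    rw [hxρ, Real.cosh_two_mul]
    show C^2 + S^2 = 1 + 2*S^2
    rw [hC2]; ring
  have step1 : 1 + (k * Real.tanh u)^2 = (s2^2 + S^2) / (s2^2 * C^2) := by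
    rw [Real.tanh_eq_sinh_div_cosh, hk]
    show 1 + (c2/s2 * (S/C))^2 = (s2^2 + S^2) / (s2^2 * C^2)
    have key : s2^2*C^2 + c2^2*S^2 = s2^2 + S^2 := by
      linear_combination (S^2) * hpy + (s2^2) * hC2
    have hne : s2^2 * C^2 ≠ 0 := by positivity
    rw [div_mul_div_comm, div_pow]
    rw [show (c2*S)^2 = c2^2*S^2 by ring, show (s2*C)^2 = s2^2*C^2 by ring]
    rw [← key, add_div, div_self hne]
  rw [hS, hcphi, hsphi, step1, hk]
  have hden : s2^2 + S^2 ≠ 0 := by positivity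
  have hden2 : s2^2*2 + S^2*2 ≠ 0 := by positivity
  field_simp
  rw [show 1 + 2 * S ^ 2 - (1 - 2 * s2 ^ 2) = 2 * (s2 ^ 2 + S ^ 2) by ring]
  field_simp

section
variable {ρ φ : ℝ}

lemma cos_lt_one_of_sin_ne (hφ : Real.sin φ ≠ 0) : Real.cos φ < 1 := by
  rcases lt_or_eq_of_le (Real.cos_le_one φ) with h | h
  · exact h
  · exfalso; apply hφ
    have := Real.sin_sq_add_cos_sq φ
    nlinarith [this]

lemma denom_pos (hφ : Real.sin φ ≠ 0) (x : ℝ) : 0 < Real.cosh x - Real.cos φ := by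
  have := Real.one_le_cosh x
  have := cos_lt_one_of_sin_ne hφ
  linarith

lemma cont_h (hρ : 0 < ρ) (hφ : Real.sin φ ≠ 0) :
    Continuous (fun s : ℝ => Real.sin φ / (Real.cosh (s / ρ) - Real.cos φ)) := by
  apply continuous_const.div
  · exact (Real.continuous_cosh.comp (continuous_id.div_const ρ)).sub continuous_const
  · intro s; exact (denom_pos hφ (s/ρ)).ne'

-- L¹ bound
lemma L1bound (hρ : 0 < ρ) (hφ : Real.sin φ ≠ 0) {T : ℝ} (hT : 0 ≤ T) :
    (∫ s in (0:ℝ)..T, Real.sin φ / (Real.cosh (s / ρ) - Real.cos φ)) ≤ π * ρ := by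
  have hder := fun x (_ : x ∈ Set.uIcc (0:ℝ) T) => hasDerivAt_H hρ hφ x
  have hint : IntervalIntegrable (fun s : ℝ => Real.sin φ / (Real.cosh (s / ρ) - Real.cos φ))
      MeasureTheory.volume 0 T := (cont_h hρ hφ).intervalIntegrable 0 T
  rw [intervalIntegral.integral_eq_sub_of_hasDerivAt hder hint]
  have h0 : Real.tanh (0 / (2*ρ)) = 0 := by norm_num [Real.tanh_zero]
  rw [h0, mul_zero, Real.arctan_zero, mul_zero, sub_zero]
  have harc : Real.arctan (Real.cos (φ/2) / Real.sin (φ/2) * Real.tanh (T / (2*ρ))) ≤ π/2 :=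
    (Real.arctan_lt_pi_div_two _).le
  calc 2 * ρ * Real.arctan (Real.cos (φ/2) / Real.sin (φ/2) * Real.tanh (T / (2*ρ)))
      ≤ 2 * ρ * (π/2) := by
        apply mul_le_mul_of_nonneg_left harc (by positivity)
    _ = π * ρ := by ring

end


lemma sq_le_sinh_sq (x : ℝ) : x^2 ≤ Real.sinh x ^2 := by
  have key : ∀ y : ℝ, 0 ≤ y → y^2 ≤ Real.sinh y ^2 := by
    intro y hy
    rcases eq_or_lt_of_le hy with h | h
    · simp [← h]
    · have := (Real.self_lt_sinh_iff).2 h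
      nlinarith
  rcases le_or_gt 0 x with h | h
  · exact key x h
  · have := key (-x) (by linarith)
    rw [Real.sinh_neg] at this; nlinarith

lemma cosh_lower (t : ℝ) : 1 + t^2/2 ≤ Real.cosh t := by
  have h2 : Real.cosh t = Real.cosh (t/2)^2 + Real.sinh (t/2)^2 := by
    rw [← Real.cosh_two_mul]; congr 1; ring
  have h3 := Real.cosh_sq' (t/2)
  have h4 := sq_le_sinh_sq (t/2)
  nlinarith

lemma pointw {ρ φ : ℝ} (hρ : 0 < ρ) (hφ : 0 < Real.sin φ) {s : ℝ} (hs : 0 < s) :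
    Real.sin φ / (Real.cosh (s/ρ) - Real.cos φ) ≤ ρ / s := by
  have hsphi : Real.sin φ = 2 * Real.sin (φ/2) * Real.cos (φ/2) := by
    rw [← Real.sin_two_mul]; congr 1; ring
  have hcphi' : Real.cos φ = 2 * Real.cos (φ/2)^2 - 1 := by
    rw [← Real.cos_two_mul]; congr 1; ring
  have hpy := Real.sin_sq_add_cos_sq (φ/2)
  have hcphi : Real.cos φ = 1 - 2 * Real.sin (φ/2)^2 := by
    rw [hcphi']; nlinarith [hpy]
  set t := s/ρ with htdef
  have ht : 0 < t := by positivity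
  have hD := denom_pos (ne_of_gt hφ) t
  have key : t * Real.sin φ ≤ Real.cosh t - Real.cos φ := by
    have h1 := cosh_lower t
    set a := Real.sin (φ/2)
    set c := Real.cos (φ/2)
    rw [hsphi, hcphi]
    nlinarith [sq_nonneg (t - 2*a*c), sq_nonneg a, hpy]
  rw [div_le_div_iff₀ hD hs]
  have : t * Real.sin φ * ρ = Real.sin φ * s := by
    rw [htdef]; field_simp
  nlinarith [mul_le_mul_of_nonneg_right key hρ.le]

theorem aux_bound {ρ : ℝ} (hρ : 0 < ρ) {α β φ : ℝ} (hα : 1 < α) (hβ : 0 ≤ β)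
    (hcβ : Real.cosh β = α) (hsφ : 0 ≤ Real.sin φ) :
    |∫ s in (0:ℝ)..β, (α - Real.cosh s) ^ (-(1/2) : ℝ) *
        (Real.sin φ / (Real.cosh (s / ρ) - Real.cos φ))|
      ≤ (20*ρ) * (α - 1) ^ (-(1/2) : ℝ) := by
  have ht : 0 < α - 1 := by linarith
  set t := α - 1 with htdef
  have hβpos : 0 < β := by
    rcases eq_or_lt_of_le hβ with h | h
    · exfalso; rw [← h, Real.cosh_zero] at hcβ; linarith
    · exact h
  have hRHS : 0 < (20*ρ) * t ^ (-(1/2) : ℝ) := by positivity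
  rcases eq_or_lt_of_le hsφ with h0 | hφpos
  · simp [← h0]
    positivity
  have hne : Real.sin φ ≠ 0 := hφpos.ne'
  set f := fun s : ℝ => (α - Real.cosh s) ^ (-(1/2) : ℝ) *
      (Real.sin φ / (Real.cosh (s / ρ) - Real.cos φ)) with hf
  have hhc : Continuous (fun s : ℝ => Real.sin φ / (Real.cosh (s / ρ) - Real.cos φ)) :=
    cont_h hρ hne
  have hhnn : ∀ u : ℝ, 0 ≤ Real.sin φ / (Real.cosh (u / ρ) - Real.cos φ) :=
    fun u => div_nonneg hφpos.le (denom_pos hne _).le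
  have hfnn : ∀ u ∈ Set.Icc (0:ℝ) β, 0 ≤ f u := by
    intro u hu
    have hcu : Real.cosh u ≤ α := by
      rw [← hcβ]
      exact Real.cosh_le_cosh.2 (by rw [abs_of_nonneg hu.1, abs_of_nonneg hβ]; exact hu.2)
    exact mul_nonneg (Real.rpow_nonneg (by linarith) _) (hhnn u)
  by_cases hInt : IntervalIntegrable f MeasureTheory.volume 0 β
  swap
  · rw [intervalIntegral.integral_undef hInt, abs_zero]
    exact hRHS.le
  rw [abs_of_nonneg (intervalIntegral.integral_nonneg hβ hfnn)]
  have hmemhalf : β/2 ∈ Set.uIcc (0:ℝ) β := by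
    rw [Set.uIcc_of_le hβ]; constructor <;> linarith
  have hInt1 : IntervalIntegrable f MeasureTheory.volume 0 (β/2) :=
    hInt.mono_set (Set.uIcc_subset_uIcc Set.left_mem_uIcc hmemhalf)
  have hInt2 : IntervalIntegrable f MeasureTheory.volume (β/2) β :=
    hInt.mono_set (Set.uIcc_subset_uIcc hmemhalf Set.right_mem_uIcc)
  rw [← intervalIntegral.integral_add_adjacent_intervals hInt1 hInt2]
  -- Piece 1
  have hquad : Real.cosh β = 2 * Real.cosh (β/2)^2 - 1 := by
    rw [show β = 2*(β/2) by ring, Real.cosh_two_mul, Real.sinh_sq]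
    ring_nf
  have h1le : (1:ℝ) ≤ Real.cosh (β/2) := Real.one_le_cosh _
  have hDbound : ∀ u ∈ Set.Icc (0:ℝ) (β/2), f u ≤
      (3/4*t) ^ (-(1/2) : ℝ) * (Real.sin φ / (Real.cosh (u / ρ) - Real.cos φ)) := by
    intro u hu
    have hch : Real.cosh u ≤ Real.cosh (β/2) :=
      Real.cosh_le_cosh.2 (by
        rw [abs_of_nonneg hu.1, abs_of_nonneg (by linarith : (0:ℝ) ≤ β/2)]; exact hu.2)
    have hge : 3/4*t ≤ α - Real.cosh u := by
      nlinarith [sq_nonneg (Real.cosh (β/2) - 1)]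
    have hrw := Real.rpow_le_rpow_of_nonpos (by positivity : (0:ℝ) < 3/4*t) hge
      (by norm_num : -(1/2:ℝ) ≤ 0)
    exact mul_le_mul_of_nonneg_right hrw (hhnn u)
  have hint1' : IntervalIntegrable (fun u : ℝ => (3/4*t) ^ (-(1/2) : ℝ) *
      (Real.sin φ / (Real.cosh (u / ρ) - Real.cos φ))) MeasureTheory.volume 0 (β/2) :=
    (continuous_const.mul hhc).intervalIntegrable _ _
  have hp1 : (∫ u in (0:ℝ)..(β/2), f u) ≤
      (3/4*t) ^ (-(1/2) : ℝ) * ∫ u in (0:ℝ)..(β/2), Real.sin φ / (Real.cosh (u / ρ) - Real.cos φ) := by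
    rw [← intervalIntegral.integral_const_mul]
    exact intervalIntegral.integral_mono_on (by linarith) hInt1 hint1' hDbound
  have hL1 : (∫ u in (0:ℝ)..(β/2), Real.sin φ / (Real.cosh (u / ρ) - Real.cos φ)) ≤ π * ρ :=
    L1bound hρ hne (by linarith)
  have h34 : ((3:ℝ)/4*t) ^ (-(1/2) : ℝ) ≤ 2 * t ^ (-(1/2) : ℝ) := by
    rw [Real.mul_rpow (by norm_num) ht.le]
    have h14 : ((1:ℝ)/4) ^ (-(1/2) : ℝ) = 2 := by
      rw [show ((1:ℝ)/4) = ((1:ℝ)/2)^(2:ℕ) by norm_num, ← Real.rpow_natCast ((1:ℝ)/2) 2,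
        ← Real.rpow_mul (by norm_num : (0:ℝ) ≤ 1/2)]
      norm_num
    have : ((3:ℝ)/4) ^ (-(1/2) : ℝ) ≤ ((1:ℝ)/4) ^ (-(1/2) : ℝ) :=
      Real.rpow_le_rpow_of_nonpos (by norm_num) (by norm_num) (by norm_num)
    have h2 : ((3:ℝ)/4) ^ (-(1/2) : ℝ) ≤ 2 := by rw [h14] at this; exact this
    exact mul_le_mul_of_nonneg_right h2 (Real.rpow_nonneg ht.le _)
  have piece1 : (∫ u in (0:ℝ)..(β/2), f u) ≤ 2 * t ^ (-(1/2) : ℝ) * (π * ρ) := by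
    calc (∫ u in (0:ℝ)..(β/2), f u)
        ≤ (3/4*t) ^ (-(1/2) : ℝ) * ∫ u in (0:ℝ)..(β/2),
            Real.sin φ / (Real.cosh (u / ρ) - Real.cos φ) := hp1
      _ ≤ (3/4*t) ^ (-(1/2) : ℝ) * (π * ρ) :=
          mul_le_mul_of_nonneg_left hL1 (Real.rpow_nonneg (by positivity) _)
      _ ≤ 2 * t ^ (-(1/2) : ℝ) * (π * ρ) :=
          mul_le_mul_of_nonneg_right h34 (by positivity)
  -- Piece 2
  have hbase : IntervalIntegrable (fun x : ℝ => x ^ (-(1/2):ℝ)) MeasureTheory.volume 0 (β/2) :=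
    intervalIntegral.intervalIntegrable_rpow' (by norm_num)
  have hcomp0 := hbase.comp_sub_left β
  rw [sub_zero, show β - β/2 = β/2 by ring] at hcomp0
  have hcomp : IntervalIntegrable (fun x : ℝ => (β - x) ^ (-(1/2):ℝ))
      MeasureTheory.volume (β/2) β := hcomp0.symm
  set K := 2*ρ/β * (t ^ (-(1/2):ℝ) * β ^ ((1/2):ℝ)) with hK
  have hgint : IntervalIntegrable (fun x : ℝ => K * (β - x) ^ (-(1/2):ℝ))
      MeasureTheory.volume (β/2) β := hcomp.const_mul K
  have hmaj : ∀ u ∈ Set.Icc (β/2) β, f u ≤ K * (β - u) ^ (-(1/2):ℝ) := by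
    intro u hu
    have hu0 : 0 < u := by have := hu.1; linarith
    rcases eq_or_lt_of_le hu.2 with heq | hlt
    · rw [heq]
      simp only [hf]
      rw [show α - Real.cosh β = 0 by rw [hcβ]; ring,
        Real.zero_rpow (by norm_num : -(1/2:ℝ) ≠ 0), zero_mul, sub_self,
        Real.zero_rpow (by norm_num : -(1/2:ℝ) ≠ 0), mul_zero]
    · have hbu : 0 < β - u := by linarith
      have hwnum : t * (β - u) / β ≤ α - Real.cosh u := by
        have h' : (α - 1) * (β - u) ≤ (α - Real.cosh u) * β := by
          rw [← hcβ]; exact cosh_chord hβpos (by linarith : (0:ℝ) ≤ u) hu.2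
        rw [div_le_iff₀ hβpos]
        exact h'
      have hpos2 : 0 < t * (β - u) / β := by positivity
      have hw : (α - Real.cosh u) ^ (-(1/2):ℝ) ≤ (t * (β - u) / β) ^ (-(1/2):ℝ) :=
        Real.rpow_le_rpow_of_nonpos hpos2 hwnum (by norm_num)
      have hh : Real.sin φ / (Real.cosh (u/ρ) - Real.cos φ) ≤ 2*ρ/β := by
        calc Real.sin φ / (Real.cosh (u/ρ) - Real.cos φ) ≤ ρ / u := pointw hρ hφpos hu0
          _ ≤ 2*ρ/β := by rw [div_le_div_iff₀ hu0 hβpos]; nlinarith [hu.1]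
      have hinv : (β⁻¹ : ℝ) ^ (-(1/2):ℝ) = β ^ ((1/2):ℝ) := by
        rw [← Real.rpow_neg_one β, ← Real.rpow_mul hβpos.le]; norm_num
      have hsplit : (t * (β - u) / β) ^ (-(1/2):ℝ)
          = t ^ (-(1/2):ℝ) * (β - u) ^ (-(1/2):ℝ) * β ^ ((1/2):ℝ) := by
        rw [div_eq_mul_inv, Real.mul_rpow (by positivity) (by positivity),
          Real.mul_rpow ht.le hbu.le, hinv]
      calc f u = (α - Real.cosh u) ^ (-(1/2):ℝ) *
            (Real.sin φ / (Real.cosh (u/ρ) - Real.cos φ)) := rfl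
        _ ≤ (t * (β - u) / β) ^ (-(1/2):ℝ) * (2*ρ/β) :=
            mul_le_mul hw hh (hhnn u) (Real.rpow_nonneg hpos2.le _)
        _ = K * (β - u) ^ (-(1/2):ℝ) := by rw [hsplit, hK]; ring
  have hp2 : (∫ u in (β/2)..β, f u) ≤ K * ∫ u in (β/2)..β, (β - u) ^ (-(1/2):ℝ) := by
    rw [← intervalIntegral.integral_const_mul]
    exact intervalIntegral.integral_mono_on (by linarith) hInt2 hgint hmaj
  have hval : (∫ u in (β/2)..β, (β - u) ^ (-(1/2):ℝ)) = 2 * (β/2) ^ ((1/2):ℝ) := by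
    rw [intervalIntegral.integral_comp_sub_left (fun x : ℝ => x ^ (-(1/2):ℝ)) β]
    rw [sub_self, show β - β/2 = β/2 by ring]
    rw [integral_rpow (Or.inl (by norm_num))]
    norm_num
    ring
  have hhalf : (β/2) ^ ((1/2):ℝ) ≤ β ^ ((1/2):ℝ) :=
    Real.rpow_le_rpow (by positivity) (by linarith) (by norm_num)
  have hββ : β ^ ((1/2):ℝ) * β ^ ((1/2):ℝ) = β := by
    rw [← Real.rpow_add hβpos]; norm_num
  have piece2 : (∫ u in (β/2)..β, f u) ≤ 4 * ρ * t ^ (-(1/2):ℝ) := by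
    have hKnn : 0 ≤ K := by positivity
    have hfin : K * (2 * (β/2) ^ ((1/2):ℝ)) ≤ 4 * ρ * t ^ (-(1/2):ℝ) := by
      have expand : K * (2 * (β/2) ^ ((1/2):ℝ)) ≤ K * (2 * β ^ ((1/2):ℝ)) :=
        mul_le_mul_of_nonneg_left (by linarith [hhalf]) hKnn
      calc K * (2 * (β/2) ^ ((1/2):ℝ)) ≤ K * (2 * β ^ ((1/2):ℝ)) := expand
        _ = 4 * ρ * t ^ (-(1/2):ℝ) * (β ^ ((1/2):ℝ) * β ^ ((1/2):ℝ) / β) := by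
            rw [hK]; ring
        _ = 4 * ρ * t ^ (-(1/2):ℝ) := by rw [hββ, div_self hβpos.ne', mul_one]
    calc (∫ u in (β/2)..β, f u) ≤ K * ∫ u in (β/2)..β, (β - u) ^ (-(1/2):ℝ) := hp2
      _ = K * (2 * (β/2) ^ ((1/2):ℝ)) := by rw [hval]
      _ ≤ _ := hfin
  have hπ : π ≤ 3.15 := Real.pi_lt_d2.le
  have hcomb : 2 * t ^ (-(1/2):ℝ) * (π * ρ) + 4 * ρ * t ^ (-(1/2):ℝ)
      ≤ 20 * ρ * t ^ (-(1/2):ℝ) := by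
    have hrnn : 0 ≤ t ^ (-(1/2):ℝ) := Real.rpow_nonneg ht.le _
    nlinarith [mul_nonneg hrnn hρ.le, hπ, Real.pi_pos]
  calc (∫ u in (0:ℝ)..(β/2), f u) + ∫ u in (β/2)..β, f u
      ≤ 2 * t ^ (-(1/2):ℝ) * (π * ρ) + 4 * ρ * t ^ (-(1/2):ℝ) := add_le_add piece1 piece2
    _ ≤ 20 * ρ * t ^ (-(1/2):ℝ) := hcomb
    _ = (20*ρ) * t ^ (-(1/2):ℝ) := by ring

/-- Inequality (eqn:alphabound): uniform bound on the diffractive angular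
integral for the wave propagator on the flat cone `C(S¹_ρ)`. -/
theorem stmt_2 : ∀ ρ : ℝ, 0 < ρ → ∃ C > (0:ℝ),
    ∀ α : ℝ, 1 < α → ∀ β : ℝ, 0 ≤ β → Real.cosh β = α → ∀ φ : ℝ,
    |∫ s in (0:ℝ)..β, (α - Real.cosh s) ^ (-(1/2) : ℝ) *
        (Real.sin φ / (Real.cosh (s / ρ) - Real.cos φ))|
      ≤ C * (α - 1) ^ (-(1/2) : ℝ) := by
  intro ρ hρ
  refine ⟨20*ρ, by positivity, ?_⟩
  intro α hα β hβ hcβ φ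
  rcases le_or_gt 0 (Real.sin φ) with h | h
  · exact aux_bound hρ hα hβ hcβ h
  · have hneg : 0 ≤ Real.sin (-φ) := by rw [Real.sin_neg]; linarith
    have hb := aux_bound hρ hα hβ hcβ hneg
    have heq : (∫ s in (0:ℝ)..β, (α - Real.cosh s) ^ (-(1/2) : ℝ) *
        (Real.sin φ / (Real.cosh (s / ρ) - Real.cos φ)))
        = -∫ s in (0:ℝ)..β, (α - Real.cosh s) ^ (-(1/2) : ℝ) *
        (Real.sin (-φ) / (Real.cosh (s / ρ) - Real.cos (-φ))) := by
      rw [← intervalIntegral.integral_neg]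
      congr 1
      funext s
      rw [Real.sin_neg, Real.cos_neg]
      ring
    rw [heq, abs_neg]
    exact hb
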